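/- arXiv:math/0505341 — 3 statements merged into one kernel-verified Lean document; each statement's English description precedes it below -/
import Mathlib

section
/- Let K be a commutative ring, and suppose there is an element X ∈ K such that X² + X = 0 and K is generated as a ring by X (i.e., K = {m·1 + n·X : m, n ∈ ℤ}). If moreover there exist two ring homomorphisms ψ_g, ψ_b : K → ℤ with ψ_g(X) = -1 and ψ_b(X) = 0, then K is isomorphic as a ring to ℤ[T]/(T² + T). -/
/-- If a commutative ring `K` is generated by an element `X` with `X² + X = 0`
(every element is `m + n·X`), and there are ring homomorphisms `ψg, ψb : K → ℤ`
with `ψg(X) = -1` and `ψb(X) = 0`, then `K ≅ ℤ[T]/(T² + T)`. -/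
theorem stmt3 {K : Type*} [CommRing K] (X : K)
    (hX : X ^ 2 + X = 0)
    (hgen : ∀ k : K, ∃ m n : ℤ, k = (m : K) + n • X)
    (ψg ψb : K →+* ℤ) (hg : ψg X = -1) (hb : ψb X = 0) :
    Nonempty (K ≃+* Polynomial ℤ ⧸ (Ideal.span {Polynomial.X ^ 2 + Polynomial.X} : Ideal (Polynomial ℤ))) := by
  classical
  set φ : Polynomial ℤ →+* K := (Polynomial.aeval X).toRingHom with hφ
  have hφX : φ (Polynomial.X ^ 2 + Polynomial.X) = 0 := by
    simp [hφ, hX]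
  -- key fact: a + b • X = 0 implies a = b = 0
  have key : ∀ a b : ℤ, (a : K) + (b : K) * X = 0 → a = 0 ∧ b = 0 := by
    intro a b h
    have h1 := congrArg ψg h
    have h2 := congrArg ψb h
    simp [hg, hb] at h1 h2
    subst h2
    simp at h1
    omega
  have hmonic : (Polynomial.X ^ 2 + Polynomial.X : Polynomial ℤ).Monic :=
    Polynomial.monic_X_pow_add (by simp)
  have hker : RingHom.ker φ = Ideal.span {Polynomial.X ^ 2 + Polynomial.X} := by
    apply le_antisymm
    · intro p hp
      have hp0 : φ p = 0 := hp
      -- divide p by X^2 + X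
      have hdiv : p %ₘ (Polynomial.X ^ 2 + Polynomial.X) +
          (Polynomial.X ^ 2 + Polynomial.X) * (p /ₘ (Polynomial.X ^ 2 + Polynomial.X)) = p :=
        Polynomial.modByMonic_add_div p _
      set r := p %ₘ (Polynomial.X ^ 2 + Polynomial.X) with hr
      have hdeg : r.degree ≤ 1 := by
        have := Polynomial.degree_modByMonic_lt p hmonic
        have hdeg2 : (Polynomial.X ^ 2 + Polynomial.X : Polynomial ℤ).degree = 2 := by
          compute_degree!
        rw [hdeg2] at this
        exact Order.le_of_lt_succ (by exact_mod_cast this)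
      have hrform := Polynomial.eq_X_add_C_of_degree_le_one hdeg
      have hφr : φ r = 0 := by
        have := congrArg φ hdiv
        rw [map_add, map_mul, hφX, zero_mul, add_zero] at this
        rw [this, hp0]
      rw [hrform] at hφr
      have : ((r.coeff 0 : ℤ) : K) + ((r.coeff 1 : ℤ) : K) * X = 0 := by
        simpa [hφ, add_comm, mul_comm] using hφr
      obtain ⟨h0, h1⟩ := key _ _ this
      have hr0 : r = 0 := by rw [hrform, h0, h1]; simp
      have : p = (Polynomial.X ^ 2 + Polynomial.X) * (p /ₘ (Polynomial.X ^ 2 + Polynomial.X)) := by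
        conv_lhs => rw [← hdiv]
        rw [hr0, zero_add]
      rw [this]
      exact Ideal.mul_mem_right _ _ (Ideal.subset_span rfl)
    · rw [Ideal.span_le]
      intro q hq
      simp only [Set.mem_singleton_iff] at hq
      subst hq
      exact hφX
  have hsurj : Function.Surjective φ := by
    intro k
    obtain ⟨m, n, hk⟩ := hgen k
    refine ⟨Polynomial.C m + Polynomial.C n * Polynomial.X, ?_⟩
    simp [hφ, hk, zsmul_eq_mul]
  have e := RingHom.quotientKerEquivOfSurjective hsurj
  replace e := (Ideal.quotEquivOfEq hker).symm.trans e
  exact ⟨e.symm⟩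
end

section
/- Let G be an ordered divisible abelian group and f : (c, +∞) → (a, b) a function given piecewise by finitely many affine maps x ↦ qx + r with q, r rational coefficients (q·x meaning the ℚ-scalar action) on subintervals partitioning (c, +∞). Then the affine piece defined on the final unbounded subinterval must have slope q = 0; i.e., no injective such f can be strictly monotone on an unbounded final piece with image in a bounded interval. -/
private lemma rat_smul_pos' {G : Type*} [AddCommGroup G] [LinearOrder G] [IsOrderedAddMonoid G] [Module ℚ G]
    {k : ℚ} (hk : 0 < k) {x : G} (hx : 0 < x) : 0 < k • x := by
  by_contra h
  push_neg at h
  have h1 : (k.den : ℚ) • (k • x) = (k.num : ℚ) • x := by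
    rw [smul_smul, Rat.den_mul_eq_num]
  rw [Nat.cast_smul_eq_nsmul, Int.cast_smul_eq_zsmul] at h1
  have hnum : 0 < k.num := Rat.num_pos.mpr hk
  have hpos : 0 < k.num • x := by
    rw [← Int.toNat_of_nonneg hnum.le, natCast_zsmul]
    exact nsmul_pos hx (by omega)
  have hnp : k.den • (k • x) ≤ 0 := nsmul_nonpos h k.den
  rw [h1] at hnp
  exact absurd hpos hnp.not_gt

/-- In an ordered divisible abelian group (an ordered `ℚ`-vector space), if a function
`f : (c,∞) → (a,b)` into a bounded interval is affine, `f x = q • x + r` with `q ∈ ℚ`,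
on a final unbounded piece `(s,∞)`, then `q = 0`; i.e. the final affine piece cannot be
strictly monotone. -/
theorem stmt8 {G : Type*} [AddCommGroup G] [LinearOrder G] [IsOrderedAddMonoid G] [Module ℚ G]
    (a b c s : G) (hab : a < b) (hcs : c ≤ s)
    (f : G → G) (hmaps : ∀ x, c < x → f x ∈ Set.Ioo a b)
    (q : ℚ) (r : G) (haff : ∀ x, s < x → f x = q • x + r) :
    q = 0 := by
  by_contra hq
  have hd : (0:G) < b - a := sub_pos.mpr hab
  set k : ℚ := 2 / |q| with hk
  have hkpos : 0 < k := by positivity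
  set x₁ : G := s + (b - a) with hx₁
  set x₂ : G := x₁ + k • (b - a) with hx₂
  have hsx₁ : s < x₁ := lt_add_of_pos_right _ hd
  have hsx₂ : s < x₂ := hsx₁.trans (lt_add_of_pos_right _ (rat_smul_pos' hkpos hd))
  have h1 := hmaps x₁ (lt_of_le_of_lt hcs hsx₁)
  have h2 := hmaps x₂ (lt_of_le_of_lt hcs hsx₂)
  have hdiff : f x₂ - f x₁ = (q * k) • (b - a) := by
    rw [haff x₁ hsx₁, haff x₂ hsx₂, add_sub_add_right_eq_sub, ← smul_sub, hx₂,
      add_sub_cancel_left, smul_smul]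
  rcases lt_or_gt_of_ne hq with hneg | hpos
  · have hqk : q * k = -2 := by
      rw [hk, abs_of_neg hneg]
      field_simp
    rw [hqk] at hdiff
    have hlt : a - b < f x₂ - f x₁ := sub_lt_sub h2.1 h1.2
    rw [hdiff, neg_smul, two_smul, ← neg_sub b a] at hlt
    have := neg_lt_neg_iff.mp hlt
    exact absurd this (not_lt.mpr (le_add_of_nonneg_left hd.le))
  · have hqk : q * k = 2 := by
      rw [hk, abs_of_pos hpos]
      field_simp
    rw [hqk] at hdiff
    have hlt : f x₂ - f x₁ < b - a := sub_lt_sub h2.2 h1.1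
    rw [hdiff, two_smul] at hlt
    exact absurd hlt (not_lt.mpr (le_add_of_nonneg_left hd.le))
end

section
/- Let G be a dense linear order without endpoints and let a < b in G. For any partition of the closed interval [a, b] into finitely many points and open intervals, the number of points exceeds the number of open intervals by exactly 1 (i.e., the geometric Euler characteristic of [a,b] is 1). Similarly, for the open interval (a,b), the number of points is one less than the number of open intervals (Euler characteristic −1). -/
open scoped Classical
open Set

section Aux

variable {G : Type*} [LinearOrder G] [DenselyOrdered G]

noncomputable def chi16 (𝒞 : Finset (Set G)) : ℤ :=
  ((𝒞.filter fun S => ∃ x : G, S = {x}).card : ℤ) -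
    ((𝒞.filter fun S => ∃ c d : G, c < d ∧ S = Set.Ioo c d).card : ℤ)

lemma not_both16 {S : Set G} (h : ∃ x : G, S = {x}) :
    ¬ (∃ c d : G, c < d ∧ S = Set.Ioo c d) := by
  rintro ⟨c, d, hcd, rfl⟩
  obtain ⟨x, hx⟩ := h
  obtain ⟨y, hcy, hyd⟩ := exists_between hcd
  obtain ⟨z, hyz, hzd⟩ := exists_between hyd
  have h1 : y ∈ ({x} : Set G) := hx ▸ ⟨hcy, hyd⟩
  have h2 : z ∈ ({x} : Set G) := hx ▸ ⟨hcy.trans hyz, hzd⟩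
  simp only [mem_singleton_iff] at h1 h2
  exact absurd (h1.trans h2.symm) hyz.ne

lemma chi16_erase_pt {𝒞 : Finset (Set G)} {S : Set G} (hS : S ∈ 𝒞)
    (hpt : ∃ x : G, S = {x}) : chi16 𝒞 = chi16 (𝒞.erase S) + 1 := by
  have h1 : S ∈ 𝒞.filter fun S => ∃ x : G, S = {x} := Finset.mem_filter.mpr ⟨hS, hpt⟩
  have h2 : S ∉ 𝒞.filter fun S => ∃ c d : G, c < d ∧ S = Set.Ioo c d := by
    simp only [Finset.mem_filter, not_and]
    exact fun _ => not_both16 hpt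
  unfold chi16
  rw [Finset.filter_erase, Finset.filter_erase, Finset.erase_eq_of_notMem h2]
  have h3 := Finset.card_erase_add_one h1
  omega

lemma chi16_erase_iv {𝒞 : Finset (Set G)} {S : Set G} (hS : S ∈ 𝒞)
    (hiv : ∃ c d : G, c < d ∧ S = Set.Ioo c d) : chi16 𝒞 = chi16 (𝒞.erase S) - 1 := by
  have h1 : S ∈ 𝒞.filter fun S => ∃ c d : G, c < d ∧ S = Set.Ioo c d :=
    Finset.mem_filter.mpr ⟨hS, hiv⟩
  have h2 : S ∉ 𝒞.filter fun S => ∃ x : G, S = {x} := by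
    simp only [Finset.mem_filter, not_and]
    exact fun _ hpt => not_both16 hpt hiv
  unfold chi16
  rw [Finset.filter_erase, Finset.filter_erase, Finset.erase_eq_of_notMem h2]
  have h3 := Finset.card_erase_add_one h1
  omega

lemma sUnion_erase16 {𝒞 : Finset (Set G)} {S : Set G}
    (hdisj : (𝒞 : Set (Set G)).Pairwise Disjoint) (hS : S ∈ 𝒞) :
    ⋃₀ ((𝒞.erase S : Finset (Set G)) : Set (Set G)) = ⋃₀ (𝒞 : Set (Set G)) \ S := by
  ext x
  constructor
  · rintro ⟨T, hT, hxT⟩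
    rw [Finset.mem_coe, Finset.mem_erase] at hT
    refine ⟨⟨T, Finset.mem_coe.mpr hT.2, hxT⟩, ?_⟩
    have hd : Disjoint T S := hdisj (Finset.mem_coe.mpr hT.2) (Finset.mem_coe.mpr hS) hT.1
    exact Set.disjoint_left.mp hd hxT
  · rintro ⟨⟨T, hT, hxT⟩, hxS⟩
    have hne : T ≠ S := fun h => hxS (h ▸ hxT)
    exact ⟨T, Finset.mem_coe.mpr (Finset.mem_erase.mpr ⟨hne, Finset.mem_coe.mp hT⟩), hxT⟩

lemma cell_nonempty16 {S : Set G}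
    (h : (∃ x : G, S = {x}) ∨ (∃ c d : G, c < d ∧ S = Set.Ioo c d)) : S.Nonempty := by
  rcases h with ⟨x, rfl⟩ | ⟨c, d, hcd, rfl⟩
  · exact ⟨x, rfl⟩
  · exact nonempty_Ioo.mpr hcd

/-- If `a` is the minimum of the union, the cell containing it must be `{a}`. -/
lemma singleton_left_mem16 {𝒞 : Finset (Set G)}
    (hcells : ∀ S ∈ 𝒞, (∃ x : G, S = {x}) ∨ (∃ c d : G, c < d ∧ S = Set.Ioo c d))
    {a : G} (ha : a ∈ ⋃₀ (𝒞 : Set (Set G)))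
    (hmin : ∀ x ∈ ⋃₀ (𝒞 : Set (Set G)), a ≤ x) : ({a} : Set G) ∈ 𝒞 := by
  obtain ⟨S, hS, haS⟩ := ha
  rw [Finset.mem_coe] at hS
  rcases hcells S hS with ⟨x, rfl⟩ | ⟨c, d, hcd, rfl⟩
  · rw [mem_singleton_iff] at haS; subst haS; exact hS
  · exfalso
    obtain ⟨hca, had⟩ := haS
    obtain ⟨y, hcy, hya⟩ := exists_between (lt_min hca (hca.trans had))
    have : y ∈ ⋃₀ (𝒞 : Set (Set G)) :=
      ⟨_, Finset.mem_coe.mpr hS, hcy, hya.trans_le (min_le_right _ _)⟩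
    exact absurd (hmin y this) (not_le.mpr (hya.trans_le (min_le_left _ _)))

/-- If `b` is the maximum of the union, the cell containing it must be `{b}`. -/
lemma singleton_right_mem16 {𝒞 : Finset (Set G)}
    (hcells : ∀ S ∈ 𝒞, (∃ x : G, S = {x}) ∨ (∃ c d : G, c < d ∧ S = Set.Ioo c d))
    {b : G} (hb : b ∈ ⋃₀ (𝒞 : Set (Set G)))
    (hmax : ∀ x ∈ ⋃₀ (𝒞 : Set (Set G)), x ≤ b) : ({b} : Set G) ∈ 𝒞 := by
  obtain ⟨S, hS, hbS⟩ := hb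
  rw [Finset.mem_coe] at hS
  rcases hcells S hS with ⟨x, rfl⟩ | ⟨c, d, hcd, rfl⟩
  · rw [mem_singleton_iff] at hbS; subst hbS; exact hS
  · exfalso
    obtain ⟨hcb, hbd⟩ := hbS
    obtain ⟨y, hby, hyd⟩ := exists_between hbd
    have : y ∈ ⋃₀ (𝒞 : Set (Set G)) :=
      ⟨_, Finset.mem_coe.mpr hS, hcb.trans hby, hyd⟩
    exact absurd (hmax y this) (not_le.mpr hby)

lemma exists_left_cell16 {𝒞 : Finset (Set G)}
    (hcells : ∀ S ∈ 𝒞, (∃ x : G, S = {x}) ∨ (∃ c d : G, c < d ∧ S = Set.Ioo c d))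
    {a b : G} (hab : a < b) (hU : ⋃₀ (𝒞 : Set (Set G)) = Set.Ioo a b) :
    ∃ d : G, a < d ∧ d ≤ b ∧ Set.Ioo a d ∈ 𝒞 := by
  have hsub : ∀ S ∈ 𝒞, S ⊆ Set.Ioo a b := fun S hS x hx =>
    hU ▸ ⟨S, Finset.mem_coe.mpr hS, hx⟩
  by_contra hno
  push_neg at hno
  have hℓ : ∀ S ∈ 𝒞, ∃ ℓ : G, a < ℓ ∧ S ⊆ Set.Ici ℓ := by
    intro S hS
    rcases hcells S hS with ⟨x, rfl⟩ | ⟨c, d, hcd, rfl⟩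
    · have hx : x ∈ Set.Ioo a b := hsub _ hS rfl
      exact ⟨x, hx.1, by simp⟩
    · have hac : a ≤ c := by
        by_contra h
        push_neg at h
        obtain ⟨y, hcy, hy⟩ := exists_between (lt_min h hcd)
        have := hsub _ hS ⟨hcy, hy.trans_le (min_le_right _ _)⟩
        exact absurd this.1 (not_lt.mpr (hy.trans_le (min_le_left _ _)).le)
      have hdb : d ≤ b := by
        by_contra h
        push_neg at h
        obtain ⟨y, hy1, hy2⟩ := exists_between (max_lt hcd h)
        have := hsub _ hS ⟨le_max_left _ _ |>.trans_lt hy1, hy2⟩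
        exact absurd this.2 (not_lt.mpr (le_max_right _ _ |>.trans hy1.le))
      rcases eq_or_lt_of_le hac with rfl | hac'
      · exact absurd hS (hno d hcd hdb)
      · exact ⟨c, hac', fun x hx => hx.1.le⟩
  have hne : 𝒞.Nonempty := by
    obtain ⟨y, hy⟩ := nonempty_Ioo.mpr hab
    rw [← hU] at hy
    obtain ⟨S, hS, _⟩ := hy
    exact ⟨S, Finset.mem_coe.mp hS⟩
  set f : Set G → G := fun S =>
    if h : ∃ ℓ : G, a < ℓ ∧ S ⊆ Set.Ici ℓ then h.choose else b with hf
  have hfprop : ∀ S ∈ 𝒞, a < f S ∧ S ⊆ Set.Ici (f S) := by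
    intro S hS
    have h := hℓ S hS
    simp only [hf, dif_pos h]
    exact h.choose_spec
  obtain ⟨S₀, hS₀, hmin⟩ := Finset.exists_min_image 𝒞 f hne
  obtain ⟨y, hay, hy⟩ := exists_between (lt_min (hfprop S₀ hS₀).1 hab)
  have hyU : y ∈ ⋃₀ (𝒞 : Set (Set G)) := by
    rw [hU]; exact ⟨hay, hy.trans_le (min_le_right _ _)⟩
  obtain ⟨S, hS, hyS⟩ := hyU
  rw [Finset.mem_coe] at hS
  have h1 : f S ≤ y := (hfprop S hS).2 hyS
  have h2 : f S₀ ≤ f S := hmin S hS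
  exact absurd (h2.trans h1) (not_le.mpr (hy.trans_le (min_le_left _ _)))

lemma Ioo_diff_Ioo16 {a b d : G} (had : a < d) (hdb : d ≤ b) :
    Set.Ioo a b \ Set.Ioo a d = Set.Ico d b := by
  ext x
  simp only [mem_diff, mem_Ioo, mem_Ico, not_and, not_lt]
  constructor
  · rintro ⟨⟨h1, h2⟩, h3⟩
    exact ⟨h3 h1, h2⟩
  · rintro ⟨h1, h2⟩
    exact ⟨⟨had.trans_le h1, h2⟩, fun _ => h1⟩

lemma key16 : ∀ (n : ℕ) (𝒞 : Finset (Set G)), 𝒞.card = n →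
    (∀ S ∈ 𝒞, (∃ x : G, S = {x}) ∨ (∃ c d : G, c < d ∧ S = Set.Ioo c d)) →
    (𝒞 : Set (Set G)).Pairwise Disjoint →
    ∀ a b : G, a < b →
      ((⋃₀ (𝒞 : Set (Set G)) = Set.Icc a b → chi16 𝒞 = 1) ∧
       (⋃₀ (𝒞 : Set (Set G)) = Set.Ico a b → chi16 𝒞 = 0) ∧
       (⋃₀ (𝒞 : Set (Set G)) = Set.Ioc a b → chi16 𝒞 = 0) ∧
       (⋃₀ (𝒞 : Set (Set G)) = Set.Ioo a b → chi16 𝒞 = -1)) := by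
  intro n
  induction n using Nat.strong_induction_on with
  | _ n IH =>
  intro 𝒞 hcard hcells hdisj a b hab
  -- helper to handle the erased family
  have step : ∀ (S : Set G), S ∈ 𝒞 →
      (𝒞.erase S).card < n ∧
      (∀ T ∈ 𝒞.erase S, (∃ x : G, T = {x}) ∨ (∃ c d : G, c < d ∧ T = Set.Ioo c d)) ∧
      ((𝒞.erase S : Finset (Set G)) : Set (Set G)).Pairwise Disjoint ∧
      ⋃₀ ((𝒞.erase S : Finset (Set G)) : Set (Set G)) = ⋃₀ (𝒞 : Set (Set G)) \ S := by
    intro S hS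
    refine ⟨?_, fun T hT => hcells T (Finset.mem_of_mem_erase hT), ?_, sUnion_erase16 hdisj hS⟩
    · rw [Finset.card_erase_of_mem hS, ← hcard]
      have : 0 < 𝒞.card := Finset.card_pos.mpr ⟨S, hS⟩
      omega
    · exact hdisj.mono (Finset.coe_subset.mpr (Finset.erase_subset _ _))
  refine ⟨?_, ?_, ?_, ?_⟩
  · -- Icc
    intro hU
    have ha : ({a} : Set G) ∈ 𝒞 := by
      apply singleton_left_mem16 hcells
      · rw [hU]; exact left_mem_Icc.mpr hab.le
      · rw [hU]; exact fun x hx => hx.1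
    obtain ⟨hlt, hc, hd, hu⟩ := step _ ha
    rw [hU, Set.Icc_diff_left] at hu
    have := ((IH _ hlt _ rfl hc hd a b hab).2.2.1) hu
    rw [chi16_erase_pt ha ⟨a, rfl⟩, this]
    ring
  · -- Ico
    intro hU
    have ha : ({a} : Set G) ∈ 𝒞 := by
      apply singleton_left_mem16 hcells
      · rw [hU]; exact left_mem_Ico.mpr hab
      · rw [hU]; exact fun x hx => hx.1
    obtain ⟨hlt, hc, hd, hu⟩ := step _ ha
    rw [hU, Set.Ico_diff_left] at hu
    have := ((IH _ hlt _ rfl hc hd a b hab).2.2.2) hu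
    rw [chi16_erase_pt ha ⟨a, rfl⟩, this]
    ring
  · -- Ioc
    intro hU
    have hb : ({b} : Set G) ∈ 𝒞 := by
      apply singleton_right_mem16 hcells
      · rw [hU]; exact right_mem_Ioc.mpr hab
      · rw [hU]; exact fun x hx => hx.2
    obtain ⟨hlt, hc, hd, hu⟩ := step _ hb
    rw [hU, Set.Ioc_sdiff_right] at hu
    have := ((IH _ hlt _ rfl hc hd a b hab).2.2.2) hu
    rw [chi16_erase_pt hb ⟨b, rfl⟩, this]
    ring
  · -- Ioo
    intro hU
    obtain ⟨d, had, hdb, hmem⟩ := exists_left_cell16 hcells hab hU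
    obtain ⟨hlt, hc, hdj, hu⟩ := step _ hmem
    rw [hU, Ioo_diff_Ioo16 had hdb] at hu
    rcases eq_or_lt_of_le hdb with rfl | hdb'
    · -- remaining family is empty
      rw [Set.Ico_self] at hu
      have hempty : 𝒞.erase (Set.Ioo a d) = ∅ := by
        apply Finset.eq_empty_of_forall_notMem
        intro T hT
        obtain ⟨x, hx⟩ := cell_nonempty16 (hc T hT)
        have : x ∈ (∅ : Set G) := hu ▸ ⟨T, Finset.mem_coe.mpr hT, hx⟩
        exact this
      rw [chi16_erase_iv hmem ⟨a, d, had, rfl⟩, hempty]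
      simp [chi16]
    · have := ((IH _ hlt _ rfl hc hdj d b hdb').2.1) hu
      rw [chi16_erase_iv hmem ⟨a, d, had, rfl⟩, this]
      ring

end Aux

/-- In a dense linear order without endpoints, for `a < b`: in any finite partition of
the closed interval `[a,b]` into cells (singletons and nonempty open intervals) the
number of singletons exceeds the number of intervals by exactly `1` (Euler
characteristic `1`), while for the open interval `(a,b)` it is one less (Euler
characteristic `-1`). -/
theorem stmt16 {G : Type*} [LinearOrder G] [DenselyOrdered G] [NoMinOrder G] [NoMaxOrder G]
    (a b : G) (hab : a < b) :
    (∀ 𝒞 : Finset (Set G),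
      (∀ S ∈ 𝒞, (∃ x : G, S = {x}) ∨ (∃ c d : G, c < d ∧ S = Set.Ioo c d)) →
      (𝒞 : Set (Set G)).Pairwise Disjoint →
      ⋃₀ (𝒞 : Set (Set G)) = Set.Icc a b →
      ((𝒞.filter fun S => ∃ x : G, S = {x}).card : ℤ) -
        ((𝒞.filter fun S => ∃ c d : G, c < d ∧ S = Set.Ioo c d).card : ℤ) = 1) ∧
    (∀ 𝒞 : Finset (Set G),
      (∀ S ∈ 𝒞, (∃ x : G, S = {x}) ∨ (∃ c d : G, c < d ∧ S = Set.Ioo c d)) →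
      (𝒞 : Set (Set G)).Pairwise Disjoint →
      ⋃₀ (𝒞 : Set (Set G)) = Set.Ioo a b →
      ((𝒞.filter fun S => ∃ x : G, S = {x}).card : ℤ) -
        ((𝒞.filter fun S => ∃ c d : G, c < d ∧ S = Set.Ioo c d).card : ℤ) = -1) := by
  constructor
  · intro 𝒞 h1 h2 h3
    exact (key16 𝒞.card 𝒞 rfl h1 h2 a b hab).1 h3
  · intro 𝒞 h1 h2 h3
    exact (key16 𝒞.card 𝒞 rfl h1 h2 a b hab).2.2.2 h3
end
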